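/- Let Γ be an abstract simplicial complex on [m]. For every t ∈ ℝ, the family (t^{a_1+⋯+a_m}/a!) indexed by those a ∈ ℕ^m with supp(a) ∈ Γ is absolutely summable and its sum equals ∑_{F ∈ Γ} (e^t − 1)^{#F}; that is, E(Γ; t) = ∑_{F ∈ Γ} (e^t − 1)^{dim(F)+1}. -/
import Mathlib

open Finset

/-- Product-of-tsums lemma for absolutely summable families indexed by `Fin m → ℕ`. -/
lemma pi_tsum_aux (m : ℕ) (f : Fin m → ℕ → ℝ) (hf : ∀ i, Summable fun n => |f i n|) :
    Summable (fun a : Fin m → ℕ => |∏ i, f i (a i)|) ∧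
      ∑' a : Fin m → ℕ, ∏ i, f i (a i) = ∏ i, ∑' n, f i n := by
  induction m with
  | zero =>
    constructor
    · exact Summable.of_finite
    · simp [tsum_eq_single (fun i : Fin 0 => 0) (fun b hb => absurd (funext fun i => i.elim0) hb)]
  | succ m ih =>
    have h0 : Summable fun n => ‖f 0 n‖ := by
      simpa only [Real.norm_eq_abs] using hf 0
    obtain ⟨ihs, iht⟩ := ih (fun i => f i.succ) (fun i => hf i.succ)
    have ihs' : Summable fun a : Fin m → ℕ => ‖∏ i : Fin m, f i.succ (a i)‖ := by
      simpa only [Real.norm_eq_abs] using ihs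
    set e : ℕ × (Fin m → ℕ) ≃ (Fin (m+1) → ℕ) := Fin.consEquiv (fun _ => ℕ) with he
    have key : ∀ z : ℕ × (Fin m → ℕ),
        ∏ i, f i (e z i) = f 0 z.1 * ∏ i : Fin m, f i.succ (z.2 i) := by
      intro z
      rw [Fin.prod_univ_succ]
      simp [he, Fin.consEquiv_apply]
    have habs : Summable fun z : ℕ × (Fin m → ℕ) => |∏ i, f i (e z i)| := by
      have := summable_mul_of_summable_norm (R := ℝ) (f := fun n => |f 0 n|)
        (g := fun a : Fin m → ℕ => |∏ i : Fin m, f i.succ (a i)|)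
        (by simpa only [Real.norm_eq_abs, abs_abs] using hf 0)
        (by simpa only [Real.norm_eq_abs, abs_abs] using ihs)
      refine this.congr fun z => ?_
      rw [key z, abs_mul]
    constructor
    · exact (Equiv.summable_iff e).mp habs
    · have hsum := tsum_mul_tsum_of_summable_norm (ι := ℕ) (ι' := Fin m → ℕ) h0 ihs'
      calc ∑' a : Fin (m+1) → ℕ, ∏ i, f i (a i)
          = ∑' z : ℕ × (Fin m → ℕ), ∏ i, f i (e z i) := (Equiv.tsum_eq e _).symm
        _ = ∑' z : ℕ × (Fin m → ℕ), f 0 z.1 * ∏ i : Fin m, f i.succ (z.2 i) := tsum_congr key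
        _ = (∑' n, f 0 n) * ∑' a : Fin m → ℕ, ∏ i : Fin m, f i.succ (a i) := hsum.symm
        _ = ∏ i, ∑' n, f i n := by rw [iht, Fin.prod_univ_succ]

/-- An abstract simplicial complex on `[m]`: contains the empty set and all
singletons, and is closed under taking subsets. -/
def IsSimplicialComplex {m : ℕ} (Γ : Finset (Finset (Fin m))) : Prop :=
  ∅ ∈ Γ ∧ (∀ i : Fin m, ({i} : Finset (Fin m)) ∈ Γ) ∧ ∀ F ∈ Γ, ∀ G, G ⊆ F → G ∈ Γ

/-- The fine exponential Hilbert series of `Γ` at `t` equals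
`∑_{F ∈ Γ} (e^t - 1)^{dim F + 1}`, the family being absolutely summable. -/
theorem fineExpHilbertSeries_eq (m : ℕ) (Γ : Finset (Finset (Fin m)))
    (hΓ : IsSimplicialComplex Γ) (t : ℝ) :
    Summable (fun a : {a : Fin m → ℕ // (univ.filter fun i => a i ≠ 0) ∈ Γ} =>
        |t ^ (∑ i, a.val i) / ∏ i, (Nat.factorial (a.val i) : ℝ)|) ∧
    ∑' a : {a : Fin m → ℕ // (univ.filter fun i => a i ≠ 0) ∈ Γ},
        t ^ (∑ i, a.val i) / ∏ i, (Nat.factorial (a.val i) : ℝ)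
      = ∑ F ∈ Γ, (Real.exp t - 1) ^ F.card := by
  classical
  set g : ℕ → ℝ := fun n => t ^ n / (Nat.factorial n : ℝ) with hgdef
  have hterm : ∀ a : Fin m → ℕ,
      t ^ (∑ i, a i) / ∏ i, (Nat.factorial (a i) : ℝ) = ∏ i, g (a i) := by
    intro a
    rw [hgdef]
    rw [Finset.prod_div_distrib, Finset.prod_pow_eq_pow_sum]
  have hg : Summable fun n => |g n| := by
    refine (Real.summable_pow_div_factorial |t|).congr fun n => ?_
    rw [hgdef]
    rw [abs_div, abs_pow, Nat.abs_cast]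
  have hgexp : ∑' n, g n = Real.exp t := by
    rw [Real.exp_eq_exp_ℝ, NormedSpace.exp_eq_tsum_div]
  -- the per-coordinate factor for a fixed face F
  set h : Finset (Fin m) → Fin m → ℕ → ℝ :=
    fun F i n => if (n ≠ 0 ↔ i ∈ F) then g n else 0 with hhdef
  have hhabs : ∀ F i, Summable fun n => |h F i n| := by
    intro F i
    refine Summable.of_nonneg_of_le (fun n => abs_nonneg _) (fun n => ?_) hg
    simp only [hhdef]
    split_ifs with hc
    · exact le_rfl
    · simp [abs_nonneg]
  have hne0 : Summable fun n => (if n ≠ 0 then g n else 0 : ℝ) := by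
    have h2 : Summable fun n => (if n = 0 then g n else 0 : ℝ) :=
      summable_of_ne_finset_zero (s := {0}) (fun n hn => by
        simp only [Finset.mem_singleton] at hn; simp [hn])
    have := (hg.of_abs).sub h2
    refine this.congr fun n => ?_
    by_cases hn : n = 0 <;> simp [hn]
  have htsum_ne : ∑' n, (if n ≠ 0 then g n else 0 : ℝ) = Real.exp t - 1 := by
    have hG : Real.exp t = g 0 + ∑' n, g (n + 1) := by
      rw [← hgexp, Summable.tsum_eq_zero_add hg.of_abs]
    have hg0 : g 0 = 1 := by simp [hgdef]
    rw [Summable.tsum_eq_zero_add hne0]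
    simp only [ne_eq, not_true_eq_false, if_false]
    rw [zero_add]
    have : ∀ n : ℕ, (if ¬(n + 1 = 0) then g (n+1) else 0 : ℝ) = g (n + 1) := by
      intro n; simp
    rw [tsum_congr this, hG, hg0]
    ring
  have htsum_h : ∀ F i, ∑' n, h F i n = if i ∈ F then Real.exp t - 1 else 1 := by
    intro F i
    by_cases hi : i ∈ F
    · rw [if_pos hi, ← htsum_ne]
      refine tsum_congr fun n => ?_
      rw [hhdef]
      simp [hi]
    · rw [if_neg hi]
      have : ∀ n, h F i n = if n = 0 then (1:ℝ) else 0 := by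
        intro n
        rw [hhdef]
        by_cases hn : n = 0 <;> simp [hn, hi, hgdef]
      rw [tsum_congr this, tsum_eq_single 0 (fun b hb => by simp [hb])]
      simp
  -- factorization of the F-indicator
  have hfact : ∀ (F : Finset (Fin m)) (a : Fin m → ℕ),
      (if (univ.filter fun i => a i ≠ 0) = F then ∏ i, g (a i) else 0)
        = ∏ i, h F i (a i) := by
    intro F a
    by_cases hs : (univ.filter fun i => a i ≠ 0) = F
    · rw [if_pos hs]
      refine Finset.prod_congr rfl fun i _ => ?_
      have hi : a i ≠ 0 ↔ i ∈ F := by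
        rw [← hs]; simp
      rw [hhdef]
      simp [hi]
    · rw [if_neg hs]
      have : ∃ i, ¬(a i ≠ 0 ↔ i ∈ F) := by
        by_contra hcon
        push_neg at hcon
        exact hs (Finset.ext fun i => by simpa using (hcon i))
      obtain ⟨i, hi⟩ := this
      refine (Finset.prod_eq_zero (Finset.mem_univ i) ?_).symm
      rw [hhdef]
      simp only [if_neg hi]
  obtain ⟨hSa, _⟩ := pi_tsum_aux m (fun _ => g) (fun _ => hg)
  have hFsum : ∀ F : Finset (Fin m),
      Summable (fun a : Fin m → ℕ =>
        (if (univ.filter fun i => a i ≠ 0) = F then ∏ i, g (a i) else 0)) := by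
    intro F
    obtain ⟨hS, _⟩ := pi_tsum_aux m (h F) (hhabs F)
    exact (hS.of_abs).congr fun a => (hfact F a).symm
  have hFtsum : ∀ F : Finset (Fin m),
      ∑' a : Fin m → ℕ,
        (if (univ.filter fun i => a i ≠ 0) = F then ∏ i, g (a i) else 0)
        = (Real.exp t - 1) ^ F.card := by
    intro F
    obtain ⟨_, hT⟩ := pi_tsum_aux m (h F) (hhabs F)
    rw [tsum_congr (hfact F), hT]
    rw [Finset.prod_congr rfl (fun i _ => htsum_h F i)]
    rw [Finset.prod_ite_mem, Finset.univ_inter, Finset.prod_const]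
  constructor
  · have := hSa.subtype {a : Fin m → ℕ | (univ.filter fun i => a i ≠ 0) ∈ Γ}
    refine this.congr fun a => ?_
    rw [Function.comp_apply, hterm a.val]
  · calc ∑' a : {a : Fin m → ℕ // (univ.filter fun i => a i ≠ 0) ∈ Γ},
          t ^ (∑ i, a.val i) / ∏ i, (Nat.factorial (a.val i) : ℝ)
        = ∑' a : {a : Fin m → ℕ // (univ.filter fun i => a i ≠ 0) ∈ Γ},
            ∏ i, g (a.val i) := tsum_congr fun a => hterm a.val
      _ = ∑' a : Fin m → ℕ, Set.indicator
            {a : Fin m → ℕ | (univ.filter fun i => a i ≠ 0) ∈ Γ}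
            (fun a => ∏ i, g (a i)) a :=
          _root_.tsum_subtype {a : Fin m → ℕ | (univ.filter fun i => a i ≠ 0) ∈ Γ}
            (fun a => ∏ i, g (a i))
      _ = ∑' a : Fin m → ℕ, ∑ F ∈ Γ,
            (if (univ.filter fun i => a i ≠ 0) = F then ∏ i, g (a i) else 0) := by
          refine tsum_congr fun a => ?_
          rw [Set.indicator_apply]
          rw [Finset.sum_ite_eq Γ (univ.filter fun i => a i ≠ 0) (fun _ => ∏ i, g (a i))]
          simp only [Set.mem_setOf_eq]
      _ = ∑ F ∈ Γ, ∑' a : Fin m → ℕ,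
            (if (univ.filter fun i => a i ≠ 0) = F then ∏ i, g (a i) else 0) :=
          Summable.tsum_finsetSum fun F _ => hFsum F
      _ = ∑ F ∈ Γ, (Real.exp t - 1) ^ F.card :=
          Finset.sum_congr rfl fun F _ => hFtsum F
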